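/- The Huber smoothing function h is directionally differentiable at every point (0,u): for all u, τ, v ∈ ℝ, the one-sided limit of (h(s·τ, u + s·v) − h(0,u))/s as s → 0⁺ exists and equals v − |τ|/2 if u > 0, equals h(τ,v) if u = 0, and equals 0 if u < 0. -/

import Mathlib

/-- The Huber smoothing function `h(ε,t)`: for `ε ≠ 0` it equals `t - |ε|/2` if `t > |ε|`,
`t²/(2|ε|)` if `0 ≤ t ≤ |ε|`, and `0` if `t < 0`; and `h(0,t) = max 0 t`. -/
noncomputable def huber (ε t : ℝ) : ℝ :=
  if ε = 0 then max 0 t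
  else if |ε| < t then t - |ε| / 2
  else if 0 ≤ t then t ^ 2 / (2 * |ε|)
  else 0

/-- The Huber function is directionally differentiable at every point `(0,u)`:
the one-sided limit of `(h(s·τ, u + s·v) − h(0,u))/s` as `s → 0⁺` equals `v − |τ|/2` if `u > 0`,
`h(τ,v)` if `u = 0`, and `0` if `u < 0`. -/
theorem huber_directional_derivative (u τ v : ℝ) :
    Filter.Tendsto (fun s : ℝ => (huber (s * τ) (u + s * v) - huber 0 u) / s)
      (nhdsWithin 0 (Set.Ioi 0))
      (nhds (if 0 < u then v - |τ| / 2 else if u = 0 then huber τ v else 0)) := by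
  set L := (if 0 < u then v - |τ| / 2 else if u = 0 then huber τ v else 0) with hLdef
  have key : ∀ᶠ s in nhdsWithin (0:ℝ) (Set.Ioi 0),
      L = (huber (s * τ) (u + s * v) - huber 0 u) / s := by
    rcases lt_trichotomy u 0 with hu | hu | hu
    · -- u < 0
      have hδ : (0:ℝ) < -u / (|v| + 1) := by
        have : (0:ℝ) < |v| + 1 := by positivity
        have : (0:ℝ) < -u := by linarith
        positivity
      filter_upwards [Ioo_mem_nhdsGT_of_mem ⟨le_refl (0:ℝ), hδ⟩] with s hs
      have h1 : s * (|v| + 1) < -u := (lt_div_iff₀ (by positivity)).mp hs.2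
      have ht : u + s * v < 0 := by nlinarith [le_abs_self v, hs.1.le]
      have e1 : huber (s * τ) (u + s * v) = 0 := by
        unfold huber
        split_ifs with h1 h2 h3
        · exact max_eq_left ht.le
        · exact absurd h2 (by push_neg; linarith [abs_nonneg (s * τ)])
        · linarith
        · rfl
      have e2 : huber 0 u = 0 := by
        simp [huber, max_eq_left hu.le]
      have hL : L = 0 := by
        rw [hLdef, if_neg (by linarith), if_neg hu.ne]
      rw [hL, e1, e2]
      simp
    · -- u = 0
      subst hu
      have hL : L = huber τ v := by rw [hLdef]; simp
      filter_upwards [self_mem_nhdsWithin] with s hs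
      have hs : (0:ℝ) < s := hs
      have e2 : huber 0 0 = 0 := by simp [huber]
      rw [hL, e2, zero_add]
      rcases eq_or_ne τ 0 with hτ | hτ
      · subst hτ
        rw [mul_zero]
        rcases le_or_gt v 0 with hv | hv
        · have : s * v ≤ 0 := mul_nonpos_of_nonneg_of_nonpos hs.le hv
          simp [huber, max_eq_left hv, max_eq_left this]
        · have : 0 ≤ s * v := by positivity
          rw [show huber 0 v = v from by simp [huber, max_eq_right hv.le],
            show huber 0 (s * v) = s * v from by simp [huber, max_eq_right this]]
          field_simp
          ring
      · have hsτ : s * τ ≠ 0 := mul_ne_zero hs.ne' hτ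
        have habs : |s * τ| = s * |τ| := by rw [abs_mul, abs_of_pos hs]
        have hτpos : (0:ℝ) < |τ| := abs_pos.mpr hτ
        unfold huber
        rw [if_neg hτ, if_neg hsτ, habs]
        simp only [mul_lt_mul_iff_right₀ hs, mul_nonneg_iff_of_pos_left hs]
        split_ifs <;> (field_simp; try ring)
    · -- u > 0
      have hδ : (0:ℝ) < u / (|v| + |τ| + 1) := by positivity
      filter_upwards [Ioo_mem_nhdsGT_of_mem ⟨le_refl (0:ℝ), hδ⟩] with s hs
      have h1 : s * (|v| + |τ| + 1) < u := (lt_div_iff₀ (by positivity)).mp hs.2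
      have ht : s * |τ| < u + s * v := by nlinarith [neg_abs_le v, hs.1.le]
      have htpos : 0 < u + s * v := by nlinarith [abs_nonneg τ, hs.1.le]
      have hL : L = v - |τ| / 2 := by rw [hLdef, if_pos hu]
      have e2 : huber 0 u = u := by simp [huber, max_eq_right hu.le]
      rcases eq_or_ne τ 0 with hτ | hτ
      · subst hτ
        have e1 : huber (s * 0) (u + s * v) = u + s * v := by
          simp [huber, max_eq_right htpos.le]
        rw [hL, e1, e2]
        field_simp [hs.1.ne']
        rw [abs_zero]; ring
      · have hsτ : s * τ ≠ 0 := mul_ne_zero hs.1.ne' hτ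
        have habs : |s * τ| = s * |τ| := by rw [abs_mul, abs_of_pos hs.1]
        have e1 : huber (s * τ) (u + s * v) = u + s * v - s * |τ| / 2 := by
          unfold huber
          rw [if_neg hsτ, habs, if_pos ht]
        rw [hL, e1, e2]
        field_simp [hs.1.ne']
        ring
  exact Filter.Tendsto.congr' key tendsto_const_nhds
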